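/- Let X be a real Banach space. If the dual norm of X* is Fréchet differentiable at every nonzero point of X*, then X is reflexive. -/

import Mathlib

open Filter Topology NormedSpace
set_option maxHeartbeats 1000000

lemma ekeland_linear {Y : Type*} [NormedAddCommGroup Y] [NormedSpace ℝ Y] [CompleteSpace Y]
    (F : Y →L[ℝ] ℝ) {ε : ℝ} (hε : 0 < ε) {v₀ : Y} (hv₀ : ‖v₀‖ ≤ 1) :
    ∃ v : Y, ‖v‖ ≤ 1 ∧ F v₀ ≤ F v ∧ ∀ f, ‖f‖ ≤ 1 → F f ≤ F v + ε * ‖f - v‖ := by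
  classical
  set S : Y → Set Y := fun w => {f | ‖f‖ ≤ 1 ∧ F w + ε * ‖f - w‖ ≤ F f} with hS
  have hmem : ∀ w, ‖w‖ ≤ 1 → w ∈ S w := fun w hw => ⟨hw, by simp⟩
  have hbdd : ∀ w, BddAbove (F '' S w) := by
    intro w
    refine ⟨‖F‖, ?_⟩
    rintro - ⟨f, hf, rfl⟩
    calc F f ≤ ‖F f‖ := le_abs_self _
    _ ≤ ‖F‖ * ‖f‖ := F.le_opNorm f
    _ ≤ ‖F‖ * 1 := by nlinarith [hf.1, norm_nonneg F]
    _ = ‖F‖ := mul_one _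
  set M : Y → ℝ := fun w => sSup (F '' S w) with hM
  have hFleM : ∀ w f, f ∈ S w → F f ≤ M w := fun w f hf => le_csSup (hbdd w) ⟨f, hf, rfl⟩
  have hnext : ∀ w, ‖w‖ ≤ 1 → ∃ f, f ∈ S w ∧ (M w + F w) / 2 ≤ F f := by
    intro w hw
    rcases le_or_gt (M w) (F w) with hMw | hMw
    · exact ⟨w, hmem w hw, by linarith⟩
    · obtain ⟨y, ⟨f, hf, rfl⟩, hy⟩ :=
        exists_lt_of_lt_csSup (⟨F w, w, hmem w hw, rfl⟩ : (F '' S w).Nonempty)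
          (show (M w + F w) / 2 < M w by linarith)
      exact ⟨f, hf, hy.le⟩
  choose! next h1 h2 using hnext
  set v : ℕ → Y := fun n => next^[n] v₀ with hv
  have hvs : ∀ n, v (n + 1) = next (v n) := fun n => Function.iterate_succ_apply' next n v₀
  have hnorm : ∀ n, ‖v n‖ ≤ 1 := by
    intro n
    induction n with
    | zero => exact hv₀
    | succ n ih => rw [hvs]; exact (h1 _ ih).1
  have hstep : ∀ n, v (n + 1) ∈ S (v n) := fun n => by rw [hvs]; exact h1 _ (hnorm n)
  have hmid : ∀ n, (M (v n) + F (v n)) / 2 ≤ F (v (n + 1)) := fun n => by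
    rw [hvs]; exact h2 _ (hnorm n)
  have hSS : ∀ w w' f, w' ∈ S w → f ∈ S w' → f ∈ S w := by
    rintro w w' f ⟨hw1, hw2⟩ ⟨hf1, hf2⟩
    refine ⟨hf1, ?_⟩
    have htri : ‖f - w‖ ≤ ‖f - w'‖ + ‖w' - w‖ := norm_sub_le_norm_sub_add_norm_sub f w' w
    nlinarith [hε.le]
  have hchain : ∀ n m, n ≤ m → v m ∈ S (v n) := by
    intro n m hnm
    induction m, hnm using Nat.le_induction with
    | base => exact hmem _ (hnorm n)
    | succ m hnm ih => exact hSS _ _ _ ih (hstep m)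
  have hd : ∀ n, M (v n) - F (v n) ≤ (M (v 0) - F (v 0)) * (1 / 2) ^ n := by
    intro n
    induction n with
    | zero => simp
    | succ n ih =>
      have hMle : M (v (n + 1)) ≤ M (v n) := by
        apply csSup_le (Set.nonempty_of_mem (Set.mem_image_of_mem F (hmem _ (hnorm (n+1)))))
        rintro - ⟨f, hf, rfl⟩
        exact hFleM _ _ (hSS _ _ _ (hstep n) hf)
      have := hmid n
      have h12 : ((1:ℝ) / 2) ^ (n + 1) = (1/2)^n * (1/2) := pow_succ _ _
      rw [h12]
      linarith
  have hd0 : 0 ≤ M (v 0) - F (v 0) := by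
    have := hFleM (v 0) (v 0) (hmem _ (hnorm 0)); linarith
  have hdist : ∀ n, dist (v n) (v (n + 1)) ≤ ((M (v 0) - F (v 0)) / ε) * (1 / 2) ^ n := by
    intro n
    have hs := (hstep n).2
    have hFM : F (v (n + 1)) ≤ M (v n) := hFleM _ _ (hstep n)
    have hdn := hd n
    rw [dist_eq_norm, norm_sub_rev]
    rw [div_mul_eq_mul_div, le_div_iff₀ hε]
    nlinarith
  obtain ⟨w, hw⟩ := cauchySeq_tendsto_of_complete
    (cauchySeq_of_le_geometric (1/2) _ (by norm_num) hdist)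
  have hwnorm : ‖w‖ ≤ 1 := le_of_tendsto hw.norm (Eventually.of_forall hnorm)
  have hwS : ∀ n, F (v n) + ε * ‖w - v n‖ ≤ F w := by
    intro n
    have hlim : Tendsto (fun m => F (v n) + ε * ‖v m - v n‖) atTop
        (𝓝 (F (v n) + ε * ‖w - v n‖)) :=
      (tendsto_const_nhds.add (tendsto_const_nhds.mul ((hw.sub tendsto_const_nhds).norm)))
    refine le_of_tendsto_of_tendsto hlim ((F.continuous.tendsto w).comp hw) ?_
    filter_upwards [eventually_ge_atTop n] with m hm
    exact (hchain n m hm).2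
  have hFw : F v₀ ≤ F w := by
    have := hwS 0
    have h0 : v 0 = v₀ := rfl
    rw [h0] at this
    nlinarith [norm_nonneg (w - v₀), hε.le]
  refine ⟨w, hwnorm, hFw, ?_⟩
  intro f hf
  by_contra hcon
  push_neg at hcon
  have hfS : ∀ n, f ∈ S (v n) := by
    intro n
    refine ⟨hf, ?_⟩
    have h9 := hwS n
    have htri : ‖f - v n‖ ≤ ‖f - w‖ + ‖w - v n‖ := norm_sub_le_norm_sub_add_norm_sub f w (v n)
    nlinarith [hε.le]
  have hle : ∀ n, F f ≤ F w + (M (v 0) - F (v 0)) * (1 / 2) ^ n := by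
    intro n
    have h1' : F f ≤ M (v n) := hFleM _ _ (hfS n)
    have h2' := hd n
    have h3' : F (v n) ≤ F w := by
      have := hwS n
      nlinarith [norm_nonneg (w - v n), hε.le]
    linarith
  have hlim2 : Tendsto (fun n : ℕ => F w + (M (v 0) - F (v 0)) * (1 / 2) ^ n) atTop (𝓝 (F w)) := by
    have : Tendsto (fun n : ℕ => ((1:ℝ) / 2) ^ n) atTop (𝓝 0) :=
      tendsto_pow_atTop_nhds_zero_of_lt_one (by norm_num) (by norm_num)
    have h2 : Tendsto (fun n : ℕ => F w + (M (v 0) - F (v 0)) * (1 / 2) ^ n) atTop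
        (𝓝 (F w + (M (v 0) - F (v 0)) * 0)) :=
      Tendsto.add tendsto_const_nhds (Tendsto.mul tendsto_const_nhds this)
    simpa using h2
  have : F f ≤ F w := le_of_tendsto_of_tendsto tendsto_const_nhds hlim2 (Eventually.of_forall hle)
  nlinarith [norm_nonneg (f - w), hε.le]


lemma dual_approx {X : Type*} [NormedAddCommGroup X] [NormedSpace ℝ X] [CompleteSpace X]
    (h : ∀ f : X →L[ℝ] ℝ, f ≠ 0 → DifferentiableAt ℝ (fun g : X →L[ℝ] ℝ => ‖g‖) f)
    (G : StrongDual ℝ (StrongDual ℝ X)) (hG : ‖G‖ = 1)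
    {ε : ℝ} (hε : 0 < ε) (hε2 : ε ≤ 1 / 2) :
    ∃ D, D ∈ closure (Set.range (inclusionInDoubleDual ℝ X)) ∧ ‖G - D‖ ≤ 7 * ε := by
  classical
  have h1 : (1 : ℝ) - ε ^ 2 < ‖G‖ := by rw [hG]; nlinarith
  obtain ⟨u₀, hu₀, hGu₀⟩ := G.exists_lt_apply_of_lt_opNorm h1
  obtain ⟨u, huG, hun⟩ : ∃ u : StrongDual ℝ X, 1 - ε ^ 2 < G u ∧ ‖u‖ ≤ 1 := by
    by_cases h0 : 0 ≤ G u₀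
    · exact ⟨u₀, by rwa [Real.norm_eq_abs, abs_of_nonneg h0] at hGu₀, hu₀.le⟩
    · refine ⟨-u₀, ?_, by rw [norm_neg]; exact hu₀.le⟩
      rw [map_neg]
      rwa [Real.norm_eq_abs, abs_of_neg (lt_of_not_ge h0)] at hGu₀
  obtain ⟨v, hv1, hv2, hv3⟩ := ekeland_linear (Y := StrongDual ℝ X) G hε hun
  have hGv : 1 - ε ^ 2 < G v := lt_of_lt_of_le huG hv2
  have hGvle : G v ≤ ‖v‖ := by
    calc G v ≤ ‖G v‖ := le_abs_self _
    _ ≤ ‖G‖ * ‖v‖ := G.le_opNorm v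
    _ = ‖v‖ := by rw [hG, one_mul]
  have hvn : (3 : ℝ) / 4 ≤ ‖v‖ := by nlinarith
  have hvpos : (0 : ℝ) < ‖v‖ := by linarith
  have hvne : v ≠ 0 := by intro h0; rw [h0, norm_zero] at hvpos; linarith
  obtain ⟨D, hDer⟩ : ∃ D : (X →L[ℝ] ℝ) →L[ℝ] ℝ, HasFDerivAt (fun g : X →L[ℝ] ℝ => ‖g‖) D v :=
    ⟨_, (h v hvne).hasFDerivAt⟩
  -- uniform Fréchet estimate
  have hfre : ∀ η : ℝ, 0 < η → ∃ t : ℝ, 0 < t ∧ ∀ z : X →L[ℝ] ℝ, ‖z‖ ≤ t →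
      |‖v + z‖ - ‖v‖ - D z| ≤ η * ‖z‖ := by
    intro η hη
    have hlo := hasFDerivAt_iff_isLittleO_nhds_zero.mp hDer
    have hh := hlo.def hη
    rw [Metric.eventually_nhds_iff] at hh
    obtain ⟨t, ht, hball⟩ := hh
    refine ⟨t / 2, by linarith, fun z hz => ?_⟩
    have hz' : dist z 0 < t := by rw [dist_zero_right]; linarith
    have := hball hz'
    simpa [Real.norm_eq_abs] using this
  have hDle : ∀ g : X →L[ℝ] ℝ, D g ≤ ‖g‖ := by
    intro g
    rcases eq_or_ne g 0 with rfl | hg0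
    · simp
    have hgpos : 0 < ‖g‖ := norm_pos_iff.mpr hg0
    refine le_of_forall_pos_le_add fun κ hκ => ?_
    obtain ⟨t, ht, hest⟩ := hfre (κ / ‖g‖) (div_pos hκ hgpos)
    set s := t / ‖g‖ with hs
    clear_value s
    have hspos : 0 < s := by rw [hs]; exact div_pos ht hgpos
    have hznorm : ‖s • g‖ = t := by
      rw [norm_smul s g, Real.norm_eq_abs, abs_of_pos hspos, hs]; field_simp
    have hestz := hest (s • g) (le_of_eq hznorm)
    have hDz : D (s • g) = s * D g := by rw [map_smul, smul_eq_mul]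
    have htri : ‖v + s • g‖ - ‖v‖ ≤ t := by
      have h' := norm_add_le v (s • g); rw [hznorm] at h'; linarith
    have habs := (abs_le.mp hestz).1
    rw [hDz, hznorm] at habs
    have hts : t = s * ‖g‖ := by rw [hs]; field_simp
    have e : κ / ‖g‖ * t = s * κ := by rw [hts]; field_simp
    have hkey : s * D g ≤ s * ‖g‖ + s * κ := by linarith
    nlinarith [hkey, hspos]
  have hDabs : ∀ g, |D g| ≤ ‖g‖ := by
    intro g
    refine abs_le.mpr ⟨?_, hDle g⟩
    have := hDle (-g)
    rw [map_neg, norm_neg] at this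
    linarith
  have hDv : D v = ‖v‖ := by
    have key : ∀ η : ℝ, 0 < η → |‖v‖ - D v| ≤ η * ‖v‖ := by
      intro η hη
      obtain ⟨t, ht, hest⟩ := hfre η hη
      set s := t / ‖v‖ with hs
      clear_value s
      have hspos : 0 < s := by rw [hs]; exact div_pos ht hvpos
      set z := s • v with hz
      clear_value z
      have hznorm : ‖z‖ = t := by
        rw [hz, norm_smul s v, Real.norm_eq_abs, abs_of_pos hspos, hs]; field_simp
      have hestz := hest z (le_of_eq hznorm)
      have hvz : ‖v + z‖ = (1 + s) * ‖v‖ := by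
        rw [hz]
        have : v + s • v = (1 + s) • v := by rw [add_smul, one_smul]
        rw [this, norm_smul (1+s) v, Real.norm_eq_abs, abs_of_pos (by linarith)]
      have hDz : D z = s * D v := by rw [hz, map_smul, smul_eq_mul]
      rw [hvz, hDz, hznorm] at hestz
      have : (1 + s) * ‖v‖ - ‖v‖ - s * D v = s * (‖v‖ - D v) := by ring
      rw [this, abs_mul, abs_of_pos hspos] at hestz
      have hts : t = s * ‖v‖ := by rw [hs]; field_simp
      rw [hts] at hestz
      have := mul_le_mul_of_nonneg_left hestz (le_of_lt (inv_pos.mpr hspos))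
      calc |‖v‖ - D v| = s⁻¹ * (s * |‖v‖ - D v|) := by field_simp
      _ ≤ s⁻¹ * (η * (s * ‖v‖)) := by
          apply mul_le_mul_of_nonneg_left hestz (le_of_lt (inv_pos.mpr hspos))
      _ = η * ‖v‖ := by field_simp
    have hz : |‖v‖ - D v| ≤ 0 := by
      refine le_of_forall_pos_le_add fun κ hκ => ?_
      have := key (κ / ‖v‖) (div_pos hκ hvpos)
      rw [div_mul_cancel₀ _ hvpos.ne'] at this
      linarith
    have := abs_nonneg (‖v‖ - D v)
    have : |‖v‖ - D v| = 0 := le_antisymm hz this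
    have := abs_eq_zero.mp this
    linarith
  have hmain : ∀ g : X →L[ℝ] ℝ, ‖g‖ ≤ 1 → G g - D g ≤ 4 * ε := by
    intro g hg
    set a := D g / ‖v‖ with ha
    clear_value a
    set p := g - a • v with hp
    clear_value p
    have hDp : D p = 0 := by
      rw [hp, map_sub, map_smul, smul_eq_mul, hDv, ha]
      field_simp
      simp
    have hav : ‖a • v‖ ≤ 1 := by
      rw [norm_smul a v, Real.norm_eq_abs, ha, abs_div, abs_of_pos hvpos, div_mul_cancel₀ _ hvpos.ne']
      exact le_trans (hDabs g) hg
    have hpn : ‖p‖ ≤ 2 := by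
      rw [hp]
      calc ‖g - a • v‖ ≤ ‖g‖ + ‖a • v‖ := norm_sub_le _ _
      _ ≤ 2 := by linarith
    have hGv1 : G v ≤ 1 := le_trans hGvle hv1
    have hGv0 : 0 < G v := by clear * - hGv hε hε2; nlinarith
    have hGp : ∀ η : ℝ, 0 < η → η ≤ 1 → G p ≤ 2 * ε + 30 * η := by
      intro η hη hη1
      obtain ⟨t₀, ht₀, hest⟩ := hfre η hη
      set t := min (t₀ / 2) 1 with htdef
      clear_value t
      have ht : 0 < t := by rw [htdef]; exact lt_min (by linarith) one_pos
      have ht1 : t ≤ 1 := by rw [htdef]; exact min_le_right _ _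
      have ht2 : t ≤ t₀ / 2 := by rw [htdef]; exact min_le_left _ _
      have htt : t * ‖p‖ ≤ t₀ := by
        calc t * ‖p‖ ≤ (t₀ / 2) * 2 := by
              apply mul_le_mul ht2 hpn (norm_nonneg p) (by linarith)
        _ = t₀ := by ring
      have hztp : ‖t • p‖ = t * ‖p‖ := by
        rw [norm_smul t p, Real.norm_eq_abs, abs_of_pos ht]
      have hz := hest (t • p) (by rw [hztp]; exact htt)
      have hDtp : D (t • p) = 0 := by rw [map_smul, hDp, smul_eq_mul, mul_zero]
      have hnb : ‖v + t • p‖ ≤ ‖v‖ + 2 * η * t := by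
        rw [hDtp, hztp] at hz
        have h2' := (abs_le.mp hz).2
        have h3' : η * (t * ‖p‖) ≤ η * (t * 2) := by
          apply mul_le_mul_of_nonneg_left _ hη.le
          exact mul_le_mul_of_nonneg_left hpn ht.le
        nlinarith
      set c := ‖v‖ / (‖v‖ + 2 * η * t) with hc
      clear_value c
      have hden : 0 < ‖v‖ + 2 * η * t := by clear * - hvpos hη ht; nlinarith
      have hcpos : 0 < c := by rw [hc]; exact div_pos hvpos hden
      have hcc : c * (‖v‖ + 2 * η * t) = ‖v‖ := by rw [hc]; exact div_mul_cancel₀ _ hden.ne'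
      have hc1 : c ≤ 1 := by rw [hc, div_le_one hden]; nlinarith
      have hfb : ‖c • (v + t • p)‖ ≤ 1 := by
        rw [norm_smul c (v + t • p), Real.norm_eq_abs, abs_of_pos hcpos]
        calc c * ‖v + t • p‖ ≤ c * (‖v‖ + 2 * η * t) := by
              apply mul_le_mul_of_nonneg_left hnb hcpos.le
        _ = ‖v‖ := hcc
        _ ≤ 1 := hv1
      have hek := hv3 _ hfb
      have hGf : G (c • (v + t • p)) = c * (G v + t * G p) := by
        rw [map_smul, map_add, map_smul, smul_eq_mul, smul_eq_mul]
      have heq2 : c • (v + t • p) - v = (c * t) • p + (c - 1) • v := by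
        rw [smul_add, smul_smul]
        rw [sub_smul c 1 v, one_smul]
        abel
      have hdist2 : ‖c • (v + t • p) - v‖ ≤ (1 - c) + 2 * t := by
        rw [heq2]
        calc ‖(c * t) • p + (c - 1) • v‖ ≤ ‖(c * t) • p‖ + ‖(c - 1) • v‖ := norm_add_le _ _
        _ = (c * t) * ‖p‖ + (1 - c) * ‖v‖ := by
            rw [norm_smul (c * t) p, norm_smul (c - 1) v, Real.norm_eq_abs, Real.norm_eq_abs,
              abs_of_pos (mul_pos hcpos ht), abs_of_nonpos (by linarith)]
            ring
        _ ≤ (1 - c) + 2 * t := by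
            clear * - hpn hv1 hcpos hc1 ht ht1
            have k1 : c * t ≤ t := by nlinarith
            have k2 : c * t * ‖p‖ ≤ t * 2 := mul_le_mul k1 hpn (norm_nonneg p) ht.le
            have k3 : (1 - c) * ‖v‖ ≤ (1 - c) * 1 :=
              mul_le_mul_of_nonneg_left hv1 (by linarith)
            linarith
      have h1c : 1 - c ≤ 3 * η * t := by clear * - hcc hvn hη ht ht1 hden hc1 hcpos; nlinarith
      have hcinv : 1 ≤ c * (1 + 3 * η) := by clear * - hcc hvn hη ht ht1 hden hcpos hη1; nlinarith
      rw [hGf] at hek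
      have hineq : c * (G v + t * G p) ≤ G v + ε * ((1 - c) + 2 * t) := by
        have := mul_le_mul_of_nonneg_left hdist2 hε.le
        linarith
      rcases le_or_gt (G p) 0 with hGp0 | hGp0
      · clear * - hGp0 hε hη; nlinarith
      have expand : c * (G v + t * G p) = c * G v + c * (t * G p) := by ring
      have e2 : (1 - c) * G v ≤ 3 * η * t := by
        have h2' := mul_le_mul_of_nonneg_left hGv1 (by linarith : (0:ℝ) ≤ 1 - c)
        clear * - h2' h1c; nlinarith
      have e3 : c * (t * G p) ≤ t * (3 * η + 3 * ε * η + 2 * ε) := by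
        have h4' : ε * ((1 - c) + 2 * t) ≤ ε * (3 * η * t + 2 * t) :=
          mul_le_mul_of_nonneg_left (by linarith) hε.le
        have h5' : ε * (3 * η * t + 2 * t) + 3 * η * t = t * (3 * η + 3 * ε * η + 2 * ε) := by
          ring
        have expand2 : (1 - c) * G v = G v - c * G v := by ring
        clear * - h4' h5' e2 hineq expand expand2; linarith
      have htp : 0 < t * G p := mul_pos ht hGp0
      have e4 : t * G p ≤ c * (1 + 3 * η) * (t * G p) := by clear * - hcinv htp; nlinarith
      have e6 : (1 + 3 * η) * (c * (t * G p)) ≤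
          (1 + 3 * η) * (t * (3 * η + 3 * ε * η + 2 * ε)) :=
        mul_le_mul_of_nonneg_left e3 (by linarith)
      have e8 : G p ≤ (1 + 3 * η) * (3 * η + 3 * ε * η + 2 * ε) := by
        have e7 : t * G p ≤ t * ((1 + 3 * η) * (3 * η + 3 * ε * η + 2 * ε)) := by
          clear * - e4 e6 e3 htp ht hη; nlinarith
        exact le_of_mul_le_mul_left e7 ht
      clear * - e8 hε hε2 hη hη1
      nlinarith [mul_le_mul_of_nonneg_right hε2 hη.le, mul_le_mul_of_nonneg_right hη1 hη.le,
        mul_nonneg hε.le hη.le, mul_nonneg (mul_nonneg hε.le hη.le) hη.le,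
        mul_le_mul_of_nonneg_right (mul_le_mul_of_nonneg_right hε2 hη.le) hη.le]
    have hGple : G p ≤ 2 * ε := by
      refine le_of_forall_pos_le_add fun κ hκ => ?_
      have h30 := hGp (min (κ / 30) 1) (lt_min (by positivity) one_pos) (min_le_right _ _)
      have : (30 : ℝ) * min (κ / 30) 1 ≤ κ := by
        have := min_le_left (κ / 30) 1; linarith
      linarith
    have hsplit : G g = G p + a * G v := by
      rw [hp, map_sub, map_smul, smul_eq_mul]; ring
    have habs : |a * G v - D g| ≤ ε := by
      have hav' : a * ‖v‖ = D g := by rw [ha, div_mul_cancel₀ _ hvpos.ne']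
      have heq : a * G v - D g = a * (G v - ‖v‖) := by rw [← hav']; ring
      rw [heq, abs_mul]
      have h1' : |G v - ‖v‖| ≤ ε ^ 2 := abs_le.mpr ⟨by clear * - hGvle hGv hv1; nlinarith, by clear * - hGvle hε; nlinarith⟩
      have h2' : |a| * ‖v‖ = |D g| := by rw [← hav', abs_mul, abs_of_pos hvpos]
      have h3' : |D g| ≤ 1 := le_trans (hDabs g) hg
      have ha43 : |a| ≤ 4 / 3 := by clear * - h2' h3' hvn; nlinarith [abs_nonneg a]
      have h6' := mul_le_mul ha43 h1' (abs_nonneg _) (by norm_num)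
      clear * - h6' hε hε2; nlinarith
    have := (abs_le.mp habs).2
    linarith
  have hGD : ‖G - D‖ ≤ 7 * ε := by
    apply ContinuousLinearMap.opNorm_le_bound _ (by positivity)
    intro g
    rcases eq_or_ne g 0 with rfl | hg0
    · simp
    have hgpos : 0 < ‖g‖ := norm_pos_iff.mpr hg0
    set g' := ‖g‖⁻¹ • g with hg'
    clear_value g'
    have hg'1 : ‖g'‖ ≤ 1 := by
      rw [hg', norm_smul ‖g‖⁻¹ g, Real.norm_eq_abs, abs_of_pos (inv_pos.mpr hgpos),
        inv_mul_cancel₀ hgpos.ne']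
    have h1' := hmain g' hg'1
    have h2' := hmain (-g') (by rw [norm_neg]; exact hg'1)
    have habs : |(G - D) g'| ≤ 4 * ε := by
      have e1 : (G - D) g' = G g' - D g' := rfl
      rw [e1, abs_le]
      constructor
      · rw [map_neg, map_neg] at h2'; linarith
      · exact h1'
    have hgg : g = ‖g‖ • g' := by rw [hg', smul_smul, mul_inv_cancel₀ hgpos.ne', one_smul]
    calc ‖(G - D) g‖ = |(G - D) g| := Real.norm_eq_abs _
    _ = ‖g‖ * |(G - D) g'| := by
        conv_lhs => rw [hgg]
        rw [map_smul, smul_eq_mul, abs_mul, abs_of_pos hgpos]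
    _ ≤ ‖g‖ * (4 * ε) := mul_le_mul_of_nonneg_left habs hgpos.le
    _ ≤ 7 * ε * ‖g‖ := by clear * - hgpos hε; nlinarith

  set J := inclusionInDoubleDual ℝ X with hJ
  clear_value J
  have hDcl : D ∈ closure (Set.range J) := by
    refine (Metric.mem_closure_iff (α := StrongDual ℝ (StrongDual ℝ X))).mpr fun δ hδ => ?_
    obtain ⟨t, ht, hest⟩ := hfre (δ / 4) (by linarith)
    set d := t * δ / 4 with hd'
    clear_value d
    have hdpos : 0 < d := by rw [hd']; positivity
    have hlt : ‖v‖ - d < ‖v‖ := by linarith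
    obtain ⟨x₀, hx₀, hx₀v⟩ := v.exists_lt_apply_of_lt_opNorm hlt
    obtain ⟨x, hxv, hxn⟩ : ∃ x : X, ‖v‖ - d < v x ∧ ‖x‖ ≤ 1 := by
      by_cases h0 : 0 ≤ v x₀
      · exact ⟨x₀, by rwa [Real.norm_eq_abs, abs_of_nonneg h0] at hx₀v, hx₀.le⟩
      · refine ⟨-x₀, ?_, by rw [norm_neg]; exact hx₀.le⟩
        rw [map_neg]
        rwa [Real.norm_eq_abs, abs_of_neg (lt_of_not_ge h0)] at hx₀v
    have claim : ∀ g : X →L[ℝ] ℝ, g x - D g ≤ δ / 2 * ‖g‖ := by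
      intro g
      rcases eq_or_ne g 0 with rfl | hg0
      · simp
      have hgpos : 0 < ‖g‖ := norm_pos_iff.mpr hg0
      set z := (t / ‖g‖) • g with hz
      clear_value z
      have hznorm : ‖z‖ = t := by
        rw [hz, norm_smul (t / ‖g‖) g, Real.norm_eq_abs, abs_of_pos (div_pos ht hgpos)]; field_simp
      have e1 : v x + z x ≤ ‖v + z‖ := by
        calc v x + z x = (v + z) x := (ContinuousLinearMap.add_apply v z x).symm
        _ ≤ ‖(v + z) x‖ := le_abs_self _
        _ ≤ ‖v + z‖ * ‖x‖ := (v + z).le_opNorm x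
        _ ≤ ‖v + z‖ * 1 := mul_le_mul_of_nonneg_left hxn (norm_nonneg _)
        _ = ‖v + z‖ := mul_one _
      have e2 : ‖v + z‖ ≤ ‖v‖ + D z + δ / 4 * t := by
        have := (abs_le.mp (hest z (le_of_eq hznorm))).2
        rw [hznorm] at this; linarith
      have e3 : z x - D z ≤ t * δ / 2 := by
        have : v x + z x ≤ ‖v‖ + D z + δ / 4 * t := le_trans e1 e2
        have h6 : ‖v‖ - v x < d := by linarith
        rw [hd'] at h6
        linarith
      have hzx : z x = t / ‖g‖ * g x := by rw [hz]; rfl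
      have hDz : D z = t / ‖g‖ * D g := by rw [hz, map_smul, smul_eq_mul]
      rw [hzx, hDz] at e3
      have : t / ‖g‖ * (g x - D g) ≤ t * δ / 2 := by linarith
      rw [div_mul_eq_mul_div, div_le_iff₀ hgpos] at this
      clear * - this ht hgpos
      nlinarith
    refine ⟨J x, ⟨x, rfl⟩, ?_⟩
    rw [dist_eq_norm (E := StrongDual ℝ (StrongDual ℝ X)), norm_sub_rev D (J x)]
    have hb : ‖J x - D‖ ≤ δ / 2 := by
      apply ContinuousLinearMap.opNorm_le_bound _ (by linarith)
      intro g
      have hJg : (J x - D) g = g x - D g := by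
        rw [hJ]; rfl
      rw [hJg, Real.norm_eq_abs]
      refine abs_le.mpr ⟨?_, claim g⟩
      have := claim (-g)
      rw [map_neg, ContinuousLinearMap.neg_apply, norm_neg] at this
      linarith
    linarith
  exact ⟨D, hDcl, hGD⟩
/-- If the dual norm of `X*` is Fréchet differentiable at every nonzero point of `X*`,
then the real Banach space `X` is reflexive (the canonical embedding of `X` into its
double dual is surjective). -/
theorem reflexive_of_dual_norm_frechetDifferentiable {X : Type*} [NormedAddCommGroup X]
    [NormedSpace ℝ X] [CompleteSpace X]
    (h : ∀ f : X →L[ℝ] ℝ, f ≠ 0 → DifferentiableAt ℝ (fun g : X →L[ℝ] ℝ => ‖g‖) f) :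
    Function.Surjective (NormedSpace.inclusionInDoubleDual ℝ X) := by
  intro F
  have hiso : Isometry (inclusionInDoubleDual ℝ X) :=
    (inclusionInDoubleDualLi ℝ (E := X)).isometry
  have hcl : IsClosed (Set.range (inclusionInDoubleDual ℝ X)) :=
    hiso.isClosedEmbedding.isClosed_range
  suffices hmem : F ∈ Set.range (inclusionInDoubleDual ℝ X) by exact hmem
  rcases eq_or_ne F 0 with rfl | hF0
  · exact ⟨0, map_zero _⟩
  rw [← hcl.closure_eq]
  refine (Metric.mem_closure_iff (α := StrongDual ℝ (StrongDual ℝ X))).mpr fun δ hδ => ?_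
  have hFpos : 0 < ‖F‖ := (F.opNorm_nonneg).lt_of_ne' fun hh => hF0 (F.opNorm_zero_iff.mp hh)
  set F' := ‖F‖⁻¹ • F with hF'
  clear_value F'
  have hF'1 : ‖F'‖ = 1 := by
    rw [hF', @norm_smul _ _ _ _ _ NormedSpace.toNormSMulClass ‖F‖⁻¹ F, Real.norm_eq_abs, abs_of_pos (inv_pos.mpr hFpos),
      inv_mul_cancel₀ hFpos.ne']
  have hεpos : 0 < min (1 / 2) (δ / (16 * ‖F‖)) := lt_min (by norm_num) (by positivity)
  obtain ⟨D, hDcl, hFD⟩ := dual_approx h F' hF'1 hεpos (min_le_left _ _)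
  obtain ⟨y, hy, hdy⟩ := (Metric.mem_closure_iff (α := StrongDual ℝ (StrongDual ℝ X))).mp hDcl (δ / (4 * ‖F‖)) (by positivity)
  obtain ⟨x, rfl⟩ := hy
  refine ⟨inclusionInDoubleDual ℝ X (‖F‖ • x), ⟨_, rfl⟩, ?_⟩
  have hJs : inclusionInDoubleDual ℝ X (‖F‖ • x) = ‖F‖ • inclusionInDoubleDual ℝ X x :=
    map_smul _ _ _
  have e1 : F = ‖F‖ • F' := by rw [hF', smul_smul, mul_inv_cancel₀ hFpos.ne', one_smul]
  have hd1 : ‖F' - D‖ ≤ 7 * min (1 / 2) (δ / (16 * ‖F‖)) := hFD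
  have hd2 : ‖D - inclusionInDoubleDual ℝ X x‖ < δ / (4 * ‖F‖) := by
    rw [← dist_eq_norm (E := StrongDual ℝ (StrongDual ℝ X))]; exact hdy
  calc dist F (inclusionInDoubleDual ℝ X (‖F‖ • x))
      = ‖(‖F‖ • F') - ‖F‖ • inclusionInDoubleDual ℝ X x‖ := by
        rw [dist_eq_norm (E := StrongDual ℝ (StrongDual ℝ X)), hJs, ← e1]
  _ = ‖F‖ * ‖F' - inclusionInDoubleDual ℝ X x‖ := by
        rw [← smul_sub ‖F‖ F' (inclusionInDoubleDual ℝ X x), @norm_smul _ _ _ _ _ NormedSpace.toNormSMulClass ‖F‖ (F' - inclusionInDoubleDual ℝ X x), Real.norm_eq_abs, abs_of_pos hFpos]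
  _ ≤ ‖F‖ * (‖F' - D‖ + ‖D - inclusionInDoubleDual ℝ X x‖) :=
        mul_le_mul_of_nonneg_left (norm_sub_le_norm_sub_add_norm_sub F' D (inclusionInDoubleDual ℝ X x)) hFpos.le
  _ < δ := by
        have hm : min (1 / 2) (δ / (16 * ‖F‖)) ≤ δ / (16 * ‖F‖) := min_le_right _ _
        have k1 : ‖F‖ * ‖F' - D‖ ≤ ‖F‖ * (7 * (δ / (16 * ‖F‖))) := by
          apply mul_le_mul_of_nonneg_left (hd1.trans (by linarith)) hFpos.le
        have k2 : ‖F‖ * ‖D - inclusionInDoubleDual ℝ X x‖ < ‖F‖ * (δ / (4 * ‖F‖)) :=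
          mul_lt_mul_of_pos_left hd2 hFpos
        have k3 : ‖F‖ * (7 * (δ / (16 * ‖F‖))) = 7 * δ / 16 := by field_simp
        have k4 : ‖F‖ * (δ / (4 * ‖F‖)) = δ / 4 := by field_simp
        nlinarith [norm_nonneg (F' - D), norm_nonneg (D - inclusionInDoubleDual ℝ X x)]
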